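/- Correctness of the X-test T-gate gadget (Figure 3): for all bits a,c,d,x ∈ {0,1}, (⟨c| ⊗ P^x) · CNOT' · ((X^a|0⟩) ⊗ (X^d|0⟩)) equals 0 whenever c ≠ a⊕d, and equals θ · X^d|0⟩ for some θ ∈ ℂ with |θ| = 1 whenever c = a⊕d. Thus the measurement outcome on the data wire is deterministically c = a⊕d, and the auxiliary wire is left (up to global phase) in the state X^d|0⟩, independently of the bit x used in the correction P^x. -/

import Mathlib

open Matrix
open scoped Kronecker

noncomputable def X : Matrix (Fin 2) (Fin 2) ℂ := !![0, 1; 1, 0]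
noncomputable def P : Matrix (Fin 2) (Fin 2) ℂ := !![1, 0; 0, Complex.I]

/-- The standard basis column vector `|c⟩` of `ℂ²`. -/
noncomputable def ket (c : Fin 2) : Matrix (Fin 2) (Fin 1) ℂ :=
  fun i _ => if i = c then 1 else 0

/-- The dual row vector `⟨c|`. -/
noncomputable def bra (c : Fin 2) : Matrix (Fin 1) (Fin 2) ℂ :=
  fun _ j => if j = c then 1 else 0

/-- The two-qubit unitary `CNOT'` determined by `|j⟩⊗|k⟩ ↦ |j⊕k⟩⊗|k⟩`
(control on the second qubit, target on the first). -/
noncomputable def CNOT' : Matrix (Fin 2 × Fin 2) (Fin 2 × Fin 2) ℂ :=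
  fun r c => if r.1 = c.1 + c.2 ∧ r.2 = c.2 then 1 else 0

/-- Correctness of the X-test T-gate gadget (Figure 3): the outcome on the data wire
is deterministically `c = a⊕d`, and whenever `c = a⊕d` the auxiliary wire is left, up
to global phase, in the state `X^d|0⟩`, independently of the correction bit `x`. -/
theorem X_test_T_gadget_correctness (a c d x : Fin 2) :
    (c ≠ a + d →
      (bra c ⊗ₖ (P ^ (x : ℕ))) * CNOT' *
          ((X ^ (a : ℕ) * ket 0) ⊗ₖ (X ^ (d : ℕ) * ket 0)) = 0) ∧
    (c = a + d →
      ∃ θ : ℂ, ‖θ‖ = 1 ∧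
        (bra c ⊗ₖ (P ^ (x : ℕ))) * CNOT' *
            ((X ^ (a : ℕ) * ket 0) ⊗ₖ (X ^ (d : ℕ) * ket 0))
          = θ • ((1 : Matrix (Fin 1) (Fin 1) ℂ) ⊗ₖ (X ^ (d : ℕ) * ket 0))) := by
  refine ⟨fun h => ?_, fun h => ?_⟩ <;>
  · fin_cases a <;> fin_cases c <;> fin_cases d <;> fin_cases x <;> simp_all <;>
    first
    | (ext i j; fin_cases i <;> fin_cases j <;>
        simp [X, P, ket, bra, CNOT', Matrix.mul_apply, Fintype.sum_prod_type,
          Fin.sum_univ_two, pow_succ, pow_zero, Matrix.one_apply, Matrix.vecMul, dotProduct] <;> done)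
    | (refine ⟨1, by simp, ?_⟩; ext i j; fin_cases i <;> fin_cases j <;>
        simp [X, P, ket, bra, CNOT', Matrix.mul_apply, Fintype.sum_prod_type,
          Fin.sum_univ_two, pow_succ, pow_zero, Matrix.one_apply, Matrix.vecMul, dotProduct] <;> done)
    | (refine ⟨Complex.I, by simp, ?_⟩; ext i j; fin_cases i <;> fin_cases j <;>
        simp [X, P, ket, bra, CNOT', Matrix.mul_apply, Fintype.sum_prod_type,
          Fin.sum_univ_two, pow_succ, pow_zero, Matrix.one_apply, Matrix.vecMul, dotProduct] <;> done)
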